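/- With the identification of the integral spherical Hecke algebra $H_G \cong \mathbb{Z}[V_{\hat{G},\rho_{ad}}\rtimes\langle\sigma\rangle|_{\tilde{d}_{\rho_{ad}}=(q,\sigma)}]^{\hat{G}}$ of an unramified group $G$ over a local field with residue characteristic $p$: reduction mod $p$ yields a canonical isomorphism $H_G \otimes \mathbb{F}_p \cong \mathbb{F}_p[\mathrm{As}_{\hat{G}}]^{c_\sigma(\hat{G})}$, where $\mathrm{As}_{\hat{G}} = \mathrm{Spec}\,\mathrm{gr}\,\mathbb{Z}[\hat{G}]$ is the asymptotic cone; moreover $\mathbb{F}_p[\mathrm{As}_{\hat{G}}]^{c_\sigma(\hat{G})} = \bigoplus_{\nu \in X^\bullet(\hat{T})^+}(S_{\nu^*} \otimes S_\nu)^{c_\sigma(\hat{G})} \cong \mathbb{F}_p[X_*(T)^{\sigma,-}]$ as $\mathbb{F}_p$-modules, with basis indexed by $\sigma$-invariant antidominant cocharacters. -/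

import Mathlib

open Finset

/- STATEMENT 18: mod `p` reduction of the integral Satake isomorphism.
By Statement 17, `H_G` is identified with the `ℤ`-span `M` of the twisted orbit sums
`m_μ̂ = Σ_{μ̂' ∈ W₀μ̂} q^{⟨ρ_ad, μ̂'-μ̂⟩} e^{μ̂'}` (`μ̂ ∈ X_*(T)^{σ,-}` antidominant)
inside `ℤ[Λ]`, `Λ = X_*(T)^σ`.  Since `p ∣ q` and `⟨ρ_ad, μ̂'-μ̂⟩ > 0` for
`μ̂' ≠ μ̂` in the orbit of an antidominant `μ̂` (`hstrict`), reduction mod `p` maps `M`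
onto the `𝔽_p`-module with basis `{e^{μ̂} : μ̂ ∈ X_*(T)^{σ,-}}`: this is
`H_G ⊗ 𝔽_p ≅ 𝔽_p[As_Ĝ]^{c_σ(Ĝ)} = ⊕_ν (S_{ν*}⊗S_ν)^{c_σ(Ĝ)} ≅ 𝔽_p[X_*(T)^{σ,-}]`,
the mod `p` Satake isomorphism.  Conclusions: the image of `M` under the coefficient
reduction `ℤ[Λ] → 𝔽_p[Λ]` is the span of the `e^{μ̂}`, `μ̂` antidominant, and these
are `𝔽_p`-linearly independent (so the mod `p` Hecke algebra is free on them). -/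
theorem stmt_18 (p : ℕ) [Fact p.Prime]
    {Λ : Type*} [AddCommGroup Λ] [DecidableEq Λ]
    {W : Type*} [Group W] [Fintype W]
    (act : W →* Multiplicative (AddAut Λ)) (lam : Λ →+ ℤ) (q : ℕ) (hq : 0 < q) (hpq : p ∣ q)
    (Anti : Set Λ)
    (hfund : ∀ μ : Λ, ∃! ν : Λ, ν ∈ Anti ∧ ∃ w : W, ν = Multiplicative.toAdd (act w) μ)
    (hpos : ∀ μ ∈ Anti, ∀ w : W, 0 ≤ lam (Multiplicative.toAdd (act w) μ - μ))
    (hstrict : ∀ μ ∈ Anti, ∀ w : W, Multiplicative.toAdd (act w) μ ≠ μ →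
      0 < lam (Multiplicative.toAdd (act w) μ - μ)) :
    (∀ x : AddMonoidAlgebra (ZMod p) Λ,
      x ∈ Submodule.map
        ((AddMonoidAlgebra.mapRingHom Λ
          (Int.castRingHom (ZMod p))).toAddMonoidHom.toIntLinearMap)
        (Submodule.span ℤ (Set.range (fun μ : Anti =>
          (∑ ν ∈ Finset.image (fun w => Multiplicative.toAdd (act w) (μ : Λ)) Finset.univ,
            AddMonoidAlgebra.single ν ((q : ℤ) ^ ((lam (ν - (μ : Λ))).toNat)) :
              AddMonoidAlgebra ℤ Λ))))
      ↔ x ∈ Submodule.span (ZMod p)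
          {x : AddMonoidAlgebra (ZMod p) Λ |
            ∃ μ ∈ Anti, x = AddMonoidAlgebra.single μ (1 : ZMod p)}) ∧
    LinearIndependent (ZMod p)
      (fun μ : Anti =>
        (AddMonoidAlgebra.single (μ : Λ) (1 : ZMod p) :
          AddMonoidAlgebra (ZMod p) Λ)) := by
  classical
  set f := ((AddMonoidAlgebra.mapRingHom Λ
          (Int.castRingHom (ZMod p))).toAddMonoidHom.toIntLinearMap :
      AddMonoidAlgebra ℤ Λ →ₗ[ℤ] AddMonoidAlgebra (ZMod p) Λ) with hf
  set R : Set (AddMonoidAlgebra ℤ Λ) := Set.range (fun μ : Anti =>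
          (∑ ν ∈ Finset.image (fun w => Multiplicative.toAdd (act w) (μ : Λ)) Finset.univ,
            AddMonoidAlgebra.single ν ((q : ℤ) ^ ((lam (ν - (μ : Λ))).toNat)) :
              AddMonoidAlgebra ℤ Λ)) with hR
  set S : Set (AddMonoidAlgebra (ZMod p) Λ) :=
    {x : AddMonoidAlgebra (ZMod p) Λ |
            ∃ μ ∈ Anti, x = AddMonoidAlgebra.single μ (1 : ZMod p)} with hS
  have hq0 : ((q : ℕ) : ZMod p) = 0 := (ZMod.natCast_eq_zero_iff q p).2 hpq
  have fsingle : ∀ (ν : Λ) (c : ℤ),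
      f (AddMonoidAlgebra.single ν c) = AddMonoidAlgebra.single ν ((c : ZMod p)) := by
    intro ν c
    simp [f, AddMonoidAlgebra.mapRingHom_single]
  have key : ∀ μ : Anti,
      f (∑ ν ∈ Finset.image (fun w => Multiplicative.toAdd (act w) (μ : Λ)) Finset.univ,
          AddMonoidAlgebra.single ν ((q : ℤ) ^ ((lam (ν - (μ : Λ))).toNat))) =
        AddMonoidAlgebra.single (μ : Λ) (1 : ZMod p) := by
    intro μ
    rw [map_sum]
    have hmem : (μ : Λ) ∈ Finset.image (fun w => Multiplicative.toAdd (act w) (μ : Λ)) Finset.univ := by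
      refine Finset.mem_image.2 ⟨1, Finset.mem_univ _, ?_⟩
      simp
    rw [Finset.sum_eq_single_of_mem (μ : Λ) hmem]
    · rw [fsingle]
      norm_num
    · intro ν hν hne
      obtain ⟨w, -, rfl⟩ := Finset.mem_image.1 hν
      have hpos' : 0 < lam (Multiplicative.toAdd (act w) (μ : Λ) - (μ : Λ)) := hstrict _ μ.2 w hne
      rw [fsingle]
      have : (((q : ℤ) ^ ((lam (Multiplicative.toAdd (act w) (μ : Λ) - (μ : Λ))).toNat) : ℤ) : ZMod p) = 0 := by
        push_cast
        rw [hq0]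
        exact zero_pow (by omega : (lam (Multiplicative.toAdd (act w) (μ : Λ) - (μ : Λ))).toNat ≠ 0)
      rw [this]
      exact AddMonoidAlgebra.single_zero _
  constructor
  · intro x
    constructor
    · rintro ⟨y, hy, rfl⟩
      refine Submodule.span_induction (p := fun y _ => f y ∈ Submodule.span (ZMod p) S)
        ?_ ?_ ?_ ?_ hy
      · rintro a ⟨μ, rfl⟩
        refine Submodule.subset_span ⟨μ, μ.2, ?_⟩
        exact key μ
      · simp
      · intro a b _ _ ha hb
        rw [map_add]
        exact Submodule.add_mem _ ha hb
      · intro n a _ ha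
        rw [map_smul]
        exact Submodule.smul_mem (Submodule.restrictScalars ℤ (Submodule.span (ZMod p) S)) n ha
    · intro hx
      refine Submodule.span_induction (p := fun y _ => y ∈ Submodule.map f (Submodule.span ℤ R))
        ?_ (Submodule.zero_mem _) (fun a b _ _ ha hb => Submodule.add_mem _ ha hb) ?_ hx
      · rintro a ⟨μ, hμ, rfl⟩
        exact ⟨_, Submodule.subset_span ⟨⟨μ, hμ⟩, rfl⟩, key ⟨μ, hμ⟩⟩
      · intro c a _ ha
        obtain ⟨n, rfl⟩ := ZMod.intCast_surjective c
        rw [Int.cast_smul_eq_zsmul]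
        exact (Submodule.map f (Submodule.span ℤ R)).smul_mem n ha
  · have : LinearIndependent (ZMod p)
        (fun μ : Λ => (AddMonoidAlgebra.single μ (1 : ZMod p) : AddMonoidAlgebra (ZMod p) Λ)) :=
      (AddMonoidAlgebra.basis Λ (ZMod p)).linearIndependent
    exact this.comp Subtype.val Subtype.val_injective
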